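/- Let 𝔪 be a multiset of integer segments of Speh type whose ends are pairwise distinct. Then the cardinality of 𝔪 is even, say 2k, and if Δ₁,…,Δ_{2k} enumerates 𝔪 with e(Δ₁) > e(Δ₂) > ⋯ > e(Δ_{2k}), then Δ_{2j−1} = νΔ_{2j} for every 1 ≤ j ≤ k. -/

import Mathlib

/-- An integer segment `[a,b]` with `a ≤ b`; `left` is its beginning, `right` is its end. -/
structure Segment where
  left : ℤ
  right : ℤ
  le : left ≤ right

/-- `ν[a,b] = [a+1,b+1]`. -/
def Segment.nu (Δ : Segment) : Segment :=
  ⟨Δ.left + 1, Δ.right + 1, by have := Δ.le; omega⟩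

/-- A multiset of segments is of Speh type if it equals `𝔪' + ν𝔪'` for some `𝔪'`. -/
def SpehType (m : Multiset Segment) : Prop :=
  ∃ m' : Multiset Segment, m = m' + m'.map Segment.nu

lemma Segment.nu_right (s : Segment) : s.nu.right = s.right + 1 := rfl

lemma key : ∀ (n : ℕ) (l : List Segment), l.length = n → SpehType (↑l) →
    ((l : Multiset Segment).map Segment.right).Nodup →
    l.Pairwise (fun s t => t.right < s.right) →
    Even l.length ∧ ∀ (j : ℕ) (h : 2 * j + 1 < l.length),
      l.get ⟨2 * j, by omega⟩ = (l.get ⟨2 * j + 1, h⟩).nu := by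
  intro n
  induction n using Nat.strong_induction_on with
  | _ n ih =>
    intro l hlen hspeh hnodup hpw
    match l with
    | [] => exact ⟨⟨0, rfl⟩, fun j h => by simp at h⟩
    | [a] =>
      obtain ⟨m', hm⟩ := hspeh
      have := congrArg Multiset.card hm
      simp at this
      omega
    | a :: b :: l' =>
      obtain ⟨m', hm⟩ := hspeh
      -- rights in the list are pairwise distinct
      have hnodupL : ((a :: b :: l').map Segment.right).Nodup := by
        rwa [Multiset.map_coe, Multiset.coe_nodup] at hnodup
      -- a is not in m'
      have ha : a ∈ m' + m'.map Segment.nu := by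
        rw [← hm]; exact Multiset.mem_coe.mpr List.mem_cons_self
      have hanotm' : a ∉ m' := by
        intro hin
        have hnu : a.nu ∈ (↑(a :: b :: l') : Multiset Segment) := by
          rw [hm]
          exact Multiset.mem_add.mpr (Or.inr (Multiset.mem_map_of_mem _ hin))
        have hne : a.nu ≠ a := by
          intro h
          have := congrArg Segment.right h
          simp [Segment.nu_right] at this
        rw [Multiset.mem_coe, List.mem_cons] at hnu
        rcases hnu with h | h
        · exact hne h
        · have := (List.pairwise_cons.mp hpw).1 _ h
          simp [Segment.nu_right] at this
      obtain ⟨c, hc, hac⟩ : ∃ c ∈ m', c.nu = a := by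
        rcases Multiset.mem_add.mp ha with h | h
        · exact absurd h hanotm'
        · exact Multiset.mem_map.mp h
      have haright : a.right = c.right + 1 := by rw [← hac]; rfl
      -- c = b
      have hcmem : c ∈ (↑(a :: b :: l') : Multiset Segment) := by
        rw [hm]; exact Multiset.mem_add.mpr (Or.inl hc)
      have hcb : c = b := by
        rw [Multiset.mem_coe, List.mem_cons] at hcmem
        rcases hcmem with h | h
        · exfalso; rw [h] at haright; omega
        · rw [List.mem_cons] at h
          rcases h with h | h
          · exact h
          · exfalso
            have h1 : b.right < a.right := (List.pairwise_cons.mp hpw).1 _ List.mem_cons_self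
            have h2 : c.right < b.right :=
              (List.pairwise_cons.mp (List.pairwise_cons.mp hpw).2).1 _ h
            omega
      -- extract c from m'
      obtain ⟨m'', hm''⟩ := Multiset.exists_cons_of_mem hc
      have hl' : (↑l' : Multiset Segment) = m'' + m''.map Segment.nu := by
        have : (↑(a :: b :: l') : Multiset Segment)
            = c.nu ::ₘ c ::ₘ (m'' + m''.map Segment.nu) := by
          rw [hm, hm'']
          simp only [Multiset.map_cons]
          rw [Multiset.cons_add, Multiset.add_cons, Multiset.cons_swap]
        have this2 : c.nu ::ₘ c ::ₘ (↑l' : Multiset Segment)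
            = c.nu ::ₘ c ::ₘ (m'' + m''.map Segment.nu) := by
          rw [← this, hac, hcb]
          simp [Multiset.cons_coe]
        exact (Multiset.cons_inj_right _).mp ((Multiset.cons_inj_right _).mp this2)
      have hnodup' : ((l' : Multiset Segment).map Segment.right).Nodup := by
        rw [Multiset.map_coe, Multiset.coe_nodup]
        simp only [List.map_cons, List.nodup_cons] at hnodupL
        exact hnodupL.2.2
      have hpw' : l'.Pairwise (fun s t => t.right < s.right) :=
        (List.pairwise_cons.mp (List.pairwise_cons.mp hpw).2).2
      have hlen' : l'.length < n := by simp at hlen; omega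
      obtain ⟨hev, hpair⟩ := ih l'.length hlen' l' rfl ⟨m'', hl'⟩ hnodup' hpw'
      constructor
      · obtain ⟨r, hr⟩ := hev
        exact ⟨r + 1, by simp; omega⟩
      · intro j h
        match j with
        | 0 =>
          show a = b.nu
          rw [← hac, hcb]
        | (j' + 1) =>
          have h' : 2 * j' + 1 < l'.length := by simp at h; omega
          exact hpair j' h'

/-- a Speh-type multiset `𝔪` of segments with pairwise distinct ends has even
cardinality, and any enumeration `Δ₁,…,Δ_{2k}` of `𝔪` with strictly decreasing ends
satisfies `Δ_{2j−1} = νΔ_{2j}` (written here 0-indexed). -/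
theorem speh_enum_pairs (m : Multiset Segment) (hspeh : SpehType m)
    (hends : (m.map Segment.right).Nodup) :
    Even (Multiset.card m) ∧
      ∀ Δ : Fin (Multiset.card m) → Segment,
        Finset.univ.val.map Δ = m →
        (∀ i j : Fin (Multiset.card m), i < j → (Δ j).right < (Δ i).right) →
        ∀ (j : ℕ) (h : 2 * j + 1 < Multiset.card m),
          Δ ⟨2 * j, by omega⟩ = (Δ ⟨2 * j + 1, h⟩).nu := by
  constructor
  · obtain ⟨m', hm⟩ := hspeh
    rw [hm]
    simp
  · intro Δ hΔ hdec j h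
    have hcoe : (↑(List.ofFn Δ) : Multiset Segment) = m := by
      rw [← Fin.univ_val_map, hΔ]
    have hlenl : (List.ofFn Δ).length = Multiset.card m := by
      have := congrArg Multiset.card hcoe
      simpa using this
    have hpw : (List.ofFn Δ).Pairwise (fun s t => t.right < s.right) := by
      rw [List.pairwise_iff_get]
      intro i j hij
      rw [List.get_ofFn, List.get_ofFn]
      apply hdec
      exact hij
    obtain ⟨_, hpair⟩ := key (List.ofFn Δ).length (List.ofFn Δ) rfl
      ⟨hspeh.choose, by rw [hcoe]; exact hspeh.choose_spec⟩
      (by rw [hcoe]; exact hends) hpw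
    have h2 : 2 * j + 1 < (List.ofFn Δ).length := by omega
    have h3 := hpair j h2
    rw [List.get_ofFn, List.get_ofFn] at h3
    exact h3
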